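/- Let r, m be real numbers with r ≥ 1, m ≥ 1, and let s be a real number with s ≥ 2rm + 2r. Let M, R₀ be real numbers with 0 < M ≤ R₀ ≤ 1, and set t = (R₀/M)^{1/(s−rm−r)}. Then t^{r(m+1)−s}·R₀ + t^{r(m+1)−m}·M ≤ 2·M^{(s−2rm+m−2r)/(s−rm−r)}. -/
import Mathlib


/-- Balancing of norms in the Main Estimate: with `t = (R₀/M)^{1/(s−rm−r)}`,
`t^{r(m+1)−s}·R₀ + t^{r(m+1)−m}·M ≤ 2·M^{(s−2rm+m−2r)/(s−rm−r)}`. -/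
theorem stmt12 (r m s M R₀ t : ℝ) (hr : 1 ≤ r) (hm : 1 ≤ m)
    (hs : 2 * r * m + 2 * r ≤ s) (hM0 : 0 < M) (hMR : M ≤ R₀) (hR1 : R₀ ≤ 1)
    (ht : t = (R₀ / M) ^ (1 / (s - r * m - r))) :
    t ^ (r * (m + 1) - s) * R₀ + t ^ (r * (m + 1) - m) * M ≤
      2 * M ^ ((s - 2 * r * m + m - 2 * r) / (s - r * m - r)) := by
  have hrm : (1:ℝ) ≤ r * m := by nlinarith
  have hd : 0 < s - r * m - r := by nlinarith
  have hR0 : 0 < R₀ := lt_of_lt_of_le hM0 hMR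
  have hq0 : 0 ≤ R₀ / M := by positivity
  have hM1 : M ≤ 1 := le_trans hMR hR1
  set e : ℝ := (s - 2 * r * m + m - 2 * r) / (s - r * m - r) with he
  have h1 : t ^ (r * (m + 1) - s) * R₀ = M := by
    rw [ht]
    rw [← Real.rpow_mul hq0]
    have : 1 / (s - r * m - r) * (r * (m + 1) - s) = -1 := by
      field_simp; ring
    rw [this, Real.rpow_neg_one]
    field_simp
  have ha2 : 0 ≤ r * (m + 1) - m := by nlinarith
  have h2 : t ^ (r * (m + 1) - m) * M ≤ M ^ e := by
    have hb : R₀ / M ≤ M⁻¹ := by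
      rw [div_le_iff₀ hM0, inv_mul_cancel₀ (ne_of_gt hM0)]; exact hR1
    have hexp : 0 ≤ 1 / (s - r * m - r) * (r * (m + 1) - m) := by positivity
    have : t ^ (r * (m + 1) - m) ≤ (M⁻¹) ^ (1 / (s - r * m - r) * (r * (m + 1) - m)) := by
      rw [ht, ← Real.rpow_mul hq0]
      exact Real.rpow_le_rpow hq0 hb hexp
    calc t ^ (r * (m + 1) - m) * M
        ≤ (M⁻¹) ^ (1 / (s - r * m - r) * (r * (m + 1) - m)) * M := by
          exact mul_le_mul_of_nonneg_right this hM0.le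
      _ = M ^ e := by
          rw [Real.inv_rpow hM0.le, ← Real.rpow_neg hM0.le,
            ← Real.rpow_add_one (ne_of_gt hM0)]
          congr 1
          rw [he]; field_simp; ring
  have h3 : M ≤ M ^ e := by
    have he1 : e ≤ 1 := by
      rw [he, div_le_one hd]; nlinarith
    calc M = M ^ (1:ℝ) := (Real.rpow_one M).symm
      _ ≤ M ^ e := Real.rpow_le_rpow_of_exponent_ge hM0 hM1 he1
  calc t ^ (r * (m + 1) - s) * R₀ + t ^ (r * (m + 1) - m) * M
      ≤ M ^ e + M ^ e := by rw [h1]; exact add_le_add h3 h2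
    _ = 2 * M ^ e := by ring
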